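/- Let d: ℕ → ℕ with d(0)=0 and d(n) the n-th letter of E_∞, and a(n) = ∑_{j=0}^n d(j) (the s = 0 Conolly sequence). Then the formal power series ∑_{n≥1} d(n) z^n equals z · ∏_{n ≥ 1} (1 + z^(2^n - 1)), and ∑_{n≥0} a(n) z^n = (z · ∏_{n ≥ 1} (1 + z^(2^n - 1)))/(1 - z). -/

import Mathlib

/-- E_0 = "1", E_{n+1} = E_n ++ E_n ++ "0". -/
def Eword : ℕ → List ℕ
  | 0 => [1]
  | n + 1 => Eword n ++ Eword n ++ [0]

/-- d(0) = 0 and d(n) is the n-th letter (1-indexed) of the infinite word E_∞. -/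
def dword (n : ℕ) : ℕ := if n = 0 then 0 else (Eword n).getD (n - 1) 0

/-- a(n) = ∑_{j=0}^n d(j), the s = 0 Conolly sequence. -/
def aword (n : ℕ) : ℕ := ∑ j ∈ Finset.range (n + 1), dword j


open Polynomial Finset

noncomputable def Plist (l : List ℕ) : Polynomial ℚ :=
  ∑ i ∈ Finset.range l.length, Polynomial.C (l.getD i 0 : ℚ) * Polynomial.X ^ (i + 1)

lemma coeff_Plist (l : List ℕ) (k : ℕ) :
    (Plist l).coeff k = if 1 ≤ k ∧ k ≤ l.length then (l.getD (k-1) 0 : ℚ) else 0 := by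
  unfold Plist
  rw [Polynomial.finset_sum_coeff]
  simp only [Polynomial.coeff_C_mul, Polynomial.coeff_X_pow]
  split_ifs with h
  · obtain ⟨h1, h2⟩ := h
    rw [Finset.sum_eq_single (k-1)]
    · simp [Nat.sub_add_cancel h1]
    · intro b _ hb
      have : ¬ (k = b + 1) := by omega
      simp [this]
    · intro h; simp at h; omega
  · apply Finset.sum_eq_zero
    intro b hb
    simp only [Finset.mem_range] at hb
    have : ¬ (k = b + 1) := by omega
    simp [this]

lemma Plist_append (l1 l2 : List ℕ) :
    Plist (l1 ++ l2) = Plist l1 + Polynomial.X ^ l1.length * Plist l2 := by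
  unfold Plist
  rw [List.length_append, Finset.sum_range_add, Finset.mul_sum]
  congr 1
  · apply Finset.sum_congr rfl
    intro i hi
    simp only [Finset.mem_range] at hi
    rw [List.getD_append _ _ _ _ hi]
  · apply Finset.sum_congr rfl
    intro i hi
    have : (l1 ++ l2).getD (l1.length + i) 0 = l2.getD i 0 := by
      rw [List.getD_append_right] <;> simp
    rw [this]; ring

lemma Eword_length (m : ℕ) : (Eword m).length = 2 ^ (m+1) - 1 := by
  induction m with
  | zero => simp [Eword]
  | succ n ih =>
      have : (2:ℕ)^(n+1) ≥ 1 := Nat.one_le_two_pow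
      simp [Eword, ih, pow_succ]
      omega

lemma F_eq_Plist (m : ℕ) :
    (Polynomial.X * ∏ n ∈ Finset.Icc 1 m, (1 + Polynomial.X ^ (2 ^ n - 1)) : Polynomial ℚ)
      = Plist (Eword m) := by
  induction m with
  | zero =>
      simp [Eword, Plist]
  | succ n ih =>
      rw [Finset.prod_Icc_succ_top (by omega : 1 ≤ n + 1), ← mul_assoc, ih]
      show Plist (Eword n) * (1 + Polynomial.X ^ (2 ^ (n+1) - 1)) = Plist (Eword (n+1))
      have h0 : Plist [0] = 0 := by simp [Plist]
      rw [show Eword (n+1) = Eword n ++ (Eword n ++ [0]) by simp [Eword],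
        Plist_append, Plist_append, h0, Eword_length]
      ring

/-- ∑_{n≥1} d(n) z^n = z · ∏_{n ≥ 1} (1 + z^(2^n - 1)) and
    ∑_{n≥0} a(n) z^n = (z · ∏_{n ≥ 1} (1 + z^(2^n - 1)))/(1 - z).
    The infinite product is a legitimate formal product: its coefficient of z^k
    only involves the factors with 2^n - 1 ≤ k, so it equals the corresponding
    coefficient of the finite product over 1 ≤ n ≤ k.  The second identity is
    expressed by multiplying through by (1 - z). -/
theorem dword_aword_generating_functions :
    (∀ k : ℕ, (dword k : ℚ)
        = (Polynomial.X *
            ∏ n ∈ Finset.Icc 1 k,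
              (1 + Polynomial.X ^ (2 ^ n - 1)) : Polynomial ℚ).coeff k) ∧
      (PowerSeries.mk fun n => (aword n : ℚ)) * (1 - PowerSeries.X)
        = PowerSeries.mk fun n => (dword n : ℚ) := by
  constructor
  · intro k
    rw [F_eq_Plist, coeff_Plist, Eword_length]
    rcases Nat.eq_zero_or_pos k with hk | hk
    · subst hk; simp [dword]
    · have hle : k ≤ 2 ^ (k+1) - 1 := by
        have := Nat.lt_two_pow_self (n := k)
        have : (2:ℕ)^k ≤ 2^(k+1) := Nat.pow_le_pow_right (by norm_num) (by omega)
        omega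
      rw [if_pos ⟨hk, by omega⟩, dword, if_neg (by omega)]
  · ext n
    rcases n with _ | n
    · simp [aword, dword, PowerSeries.coeff_zero_eq_constantCoeff]
    · rw [mul_sub, mul_one, map_sub, PowerSeries.coeff_succ_mul_X,
        PowerSeries.coeff_mk, PowerSeries.coeff_mk, PowerSeries.coeff_mk]
      rw [aword, aword, Finset.sum_range_succ]
      push_cast
      ring
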